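/- In the upper half-plane model, let A be the geodesic given by the positive imaginary axis and let z₁, z be points on the same component of the hypercycle C(t,A) at distance t from A, with |z₁| = 1 and |z| = r ≥ 1. Then cosh(t) ≤ (2/log r)·sinh(d(z₁,z)/2), where d is the hyperbolic distance. -/

import Mathlib

open Real

/-- Hyperbolic distance in the upper half-plane model `{z : ℂ | 0 < z.im}`,
via the standard identity `2·sinh(d(z,w)/2) = |z − w| / √(Im z · Im w)`. -/
noncomputable def hdist2 (z w : ℂ) : ℝ :=
  2 * Real.arsinh (‖z - w‖ / (2 * Real.sqrt (z.im * w.im)))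

/-- In the upper half-plane model, let `A` be the positive imaginary axis and let
`z₁ = e^{iθ}`, `z = r·e^{iθ}` (with `r > 1`) lie on the same component of the
hypercycle `C(t,A)` at distance `t` from `A`, so that `cosh t · sin θ = 1`.
Then `cosh t ≤ (2/log r)·sinh(d(z₁,z)/2)` where `d` is the hyperbolic distance
(`log r` is the distance between the orthogonal projections of `z₁, z` to `A`). -/
theorem cosh_le_of_hypercycle (t θ r : ℝ) (ht : 0 ≤ t)
    (hθ₀ : 0 < θ) (hθ₁ : θ ≤ Real.pi / 2)
    (hcos : Real.cosh t * Real.sin θ = 1)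
    (hr : 1 < r)
    (z₁ z : ℂ)
    (hz₁ : z₁ = Complex.exp (θ * Complex.I))
    (hz : z = (r : ℂ) * Complex.exp (θ * Complex.I)) :
    Real.cosh t ≤ (2 / Real.log r) * Real.sinh (hdist2 z₁ z / 2) := by
  have hs : 0 < Real.sin θ :=
    Real.sin_pos_of_pos_of_lt_pi hθ₀ (lt_of_le_of_lt hθ₁ (by linarith [Real.pi_pos]))
  have hr0 : (0:ℝ) < r := by linarith
  have hsr : 0 < Real.sqrt r := Real.sqrt_pos.mpr hr0
  have hrr : Real.sqrt r * Real.sqrt r = r := Real.mul_self_sqrt hr0.le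
  have him1 : z₁.im = Real.sin θ := by
    rw [hz₁]; simp
  have him : z.im = r * Real.sin θ := by
    rw [hz]; simp [Complex.mul_im]
  have habs : ‖z₁ - z‖ = r - 1 := by
    rw [hz₁, hz]
    rw [show Complex.exp (θ*Complex.I) - (r:ℂ) * Complex.exp (θ*Complex.I)
        = ((1 - r : ℝ) : ℂ) * Complex.exp (θ*Complex.I) by push_cast; ring]
    rw [norm_mul, Complex.norm_exp, Complex.norm_real]
    simp [abs_of_nonpos (by linarith : (1:ℝ) - r ≤ 0)]
  have hsqrt : Real.sqrt (z₁.im * z.im) = Real.sin θ * Real.sqrt r := by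
    rw [him1, him, show Real.sin θ * (r * Real.sin θ) = Real.sin θ ^ 2 * r by ring,
      Real.sqrt_mul (sq_nonneg _), Real.sqrt_sq hs.le]
  have hsinh : Real.sinh (hdist2 z₁ z / 2) = (r - 1) / (2 * (Real.sin θ * Real.sqrt r)) := by
    unfold hdist2
    rw [habs, hsqrt, show ∀ a : ℝ, 2 * a / 2 = a from fun a => by ring, Real.sinh_arsinh]
  have hL : 0 < Real.log r := Real.log_pos hr
  have hexp : Real.exp (Real.log r / 2) = Real.sqrt r := by
    rw [← Real.log_sqrt hr0.le, Real.exp_log hsr]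
  have hkey : Real.log r ≤ (r - 1) / Real.sqrt r := by
    have h1 : Real.log r / 2 ≤ Real.sinh (Real.log r / 2) :=
      Real.self_le_sinh_iff.mpr (by positivity)
    have h2 : Real.sinh (Real.log r / 2) = (r - 1) / (2 * Real.sqrt r) := by
      rw [Real.sinh_eq, Real.exp_neg, hexp]
      rw [div_eq_div_iff two_ne_zero (by positivity)]
      field_simp
      nlinarith [hrr]
    rw [h2, div_le_div_iff₀ two_pos (by positivity)] at h1
    rw [le_div_iff₀ hsr]
    nlinarith [h1]
  have hcosh : Real.cosh t = 1 / Real.sin θ := by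
    field_simp
    linarith [hcos]
  rw [hsinh, hcosh]
  have heq : 2 / Real.log r * ((r - 1) / (2 * (Real.sin θ * Real.sqrt r)))
      = (r - 1) / (Real.log r * Real.sin θ * Real.sqrt r) := by
    field_simp
  rw [heq, div_le_div_iff₀ hs (by positivity)]
  rw [le_div_iff₀ hsr] at hkey
  nlinarith [mul_le_mul_of_nonneg_left hkey hs.le]
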